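/- The convex hull of D'_k (the set of k-sparse traffic matrices) equals D_k: conv(D'_k) = D_k. -/

import Mathlib

/-- Node set of the `N × N` torus: `Z_N × Z_N` with coordinatewise addition mod `N`. -/
abbrev Vt (N : ℕ) := ZMod N × ZMod N

/-- The four link directions `{e1, e2, -e1, -e2}`. -/
def dirs (N : ℕ) : Finset (Vt N) :=
  {((1 : ZMod N), (0 : ZMod N)), (0, 1), (-1, 0), (0, -1)}

/-- Edge set of the directed torus graph: `(i, i+e)` for `i ∈ V`, `e ∈ A`. -/
def Edges (N : ℕ) : Set (Vt N × Vt N) := {p | ∃ e ∈ dirs N, p.2 = p.1 + e}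

/-- Index set of nonzero displacements `t ∈ V \ {0}`. -/
def tns (N : ℕ) [NeZero N] : Finset (Vt N) := Finset.univ.filter (· ≠ 0)

/-- Row (source) sum of a traffic matrix: `Σ_{t ≠ 0} d_{s,s+t}`. -/
def rowSum (N : ℕ) [NeZero N] (d : Vt N → Vt N → ℝ) (s : Vt N) : ℝ :=
  ∑ t ∈ tns N, d s t

/-- Column (sink) sum of a traffic matrix at node `s`: `Σ_{t ≠ 0} d_{s-t,s}`. -/
def colSum (N : ℕ) [NeZero N] (d : Vt N → Vt N → ℝ) (s : Vt N) : ℝ :=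
  ∑ t ∈ tns N, d (s - t) t

/-- Total traffic `Σ_{s,t} d_{s,s+t}`. -/
def totalSum (N : ℕ) [NeZero N] (d : Vt N → Vt N → ℝ) : ℝ :=
  ∑ s : Vt N, rowSum N d s

/-- `d` is a valid (hose-feasible) traffic matrix. -/
def IsTraffic (N : ℕ) [NeZero N] (d : Vt N → Vt N → ℝ) : Prop :=
  (∀ s t, 0 ≤ d s t) ∧ (∀ s, d s 0 = 0) ∧
  (∀ s, rowSum N d s ≤ 1) ∧ (∀ s, colSum N d s ≤ 1)

/-- `d` is `k`-limited: hose-feasible with total traffic at most `k`. -/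
def kLimited (N : ℕ) [NeZero N] (k : ℕ) (d : Vt N → Vt N → ℝ) : Prop :=
  IsTraffic N d ∧ totalSum N d ≤ (k : ℝ)

/-- `d` is `k`-sparse: hose-feasible with at most `k` sources and `k` sinks. -/
def kSparse (N : ℕ) [NeZero N] (k : ℕ) (d : Vt N → Vt N → ℝ) : Prop :=
  IsTraffic N d ∧
  {s : Vt N | ∃ t, t ≠ 0 ∧ d s t ≠ 0}.ncard ≤ k ∧
  {s : Vt N | ∃ t, t ≠ 0 ∧ d (s - t) t ≠ 0}.ncard ≤ k

/-- `f s t i e` is the fraction of traffic of pair `(s, s+t)` routed on link `(i, i+e)`.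
`f` is a valid routing policy: flow conservation and `0 ≤ f ≤ 1`. -/
def IsRouting (N : ℕ) [NeZero N] (f : Vt N → Vt N → Vt N → Vt N → ℝ) : Prop :=
  (∀ s t, t ≠ 0 → ∀ i : Vt N,
    (∑ e ∈ dirs N, f s t i e) - (∑ e ∈ dirs N, f s t (i + e) (-e)) =
      (if i = s then 1 else if i = s + t then -1 else 0)) ∧
  (∀ s t i e, 0 ≤ f s t i e ∧ f s t i e ≤ 1)

/-- Load on link `(i, i+e)` under routing `f` and traffic `d`. -/
def load (N : ℕ) [NeZero N] (f : Vt N → Vt N → Vt N → Vt N → ℝ)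
    (d : Vt N → Vt N → ℝ) (i e : Vt N) : ℝ :=
  ∑ s : Vt N, ∑ t ∈ tns N, d s t * f s t i e

/-- Maximum load on any link. -/
noncomputable def maxLoad (N : ℕ) [NeZero N] (f : Vt N → Vt N → Vt N → Vt N → ℝ)
    (d : Vt N → Vt N → ℝ) : ℝ :=
  sSup {x | ∃ i e, e ∈ dirs N ∧ x = load N f d i e}

/-- Optimal oblivious worst-case load over `k`-limited traffic. -/
noncomputable def thetaStar (N : ℕ) [NeZero N] (k : ℕ) : ℝ :=
  sInf {x | ∃ f, IsRouting N f ∧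
    x = sSup {y | ∃ d, kLimited N k d ∧ y = maxLoad N f d}}




open Finset

section Stmt19Aux

variable {N : ℕ} [NeZero N]

private lemma sum_tns_eq (g : Vt N → ℝ) (h0 : g 0 = 0) :
    ∑ t ∈ tns N, g t = ∑ t : Vt N, g t := by
  refine Finset.sum_subset (Finset.filter_subset _ _) ?_
  intro x _ hx
  simp only [tns, Finset.mem_filter, Finset.mem_univ, true_and, not_not] at hx
  rw [hx, h0]

private lemma mem_tns {t : Vt N} (ht : t ∈ tns N) : t ≠ 0 := by
  simpa [tns] using ht

private lemma rowSum_eq_sum (d : Vt N → Vt N → ℝ) (h0 : ∀ s, d s 0 = 0) (s : Vt N) :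
    rowSum N d s = ∑ t : Vt N, d s t := by
  rw [rowSum]; exact sum_tns_eq _ (h0 s)

private lemma colSum_eq_sum (d : Vt N → Vt N → ℝ) (h0 : ∀ s, d s 0 = 0) (s : Vt N) :
    colSum N d s = ∑ t : Vt N, d (s - t) t := by
  rw [colSum]; exact sum_tns_eq _ (by simpa using h0 s)

private lemma sum_dm_row (d : Vt N → Vt N → ℝ) (h0 : ∀ s, d s 0 = 0) (i : Vt N) :
    ∑ j : Vt N, d i (j - i) = rowSum N d i := by
  rw [rowSum_eq_sum d h0]
  exact Fintype.sum_equiv (Equiv.subRight i) _ _ (fun j => rfl)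

private lemma sum_dm_col (d : Vt N → Vt N → ℝ) (h0 : ∀ s, d s 0 = 0) (j : Vt N) :
    ∑ i : Vt N, d i (j - i) = colSum N d j := by
  rw [colSum_eq_sum d h0]
  exact (Fintype.sum_equiv (Equiv.subLeft j) _ _ (fun t => by simp [Equiv.subLeft_apply, sub_sub_cancel])).symm

private lemma sum_colSum (d : Vt N → Vt N → ℝ) (h0 : ∀ s, d s 0 = 0) :
    ∑ j : Vt N, colSum N d j = totalSum N d := by
  rw [totalSum]
  calc ∑ j : Vt N, colSum N d j = ∑ j : Vt N, ∑ i : Vt N, d i (j - i) := by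
        exact Finset.sum_congr rfl fun j _ => (sum_dm_col d h0 j).symm
    _ = ∑ i : Vt N, ∑ j : Vt N, d i (j - i) := Finset.sum_comm
    _ = ∑ i : Vt N, rowSum N d i := Finset.sum_congr rfl fun i _ => sum_dm_row d h0 i

private lemma sum_ite_le_one {α : Type*} (s : Finset α) (P : α → Prop) [DecidablePred P]
    (h : ∀ a ∈ s, ∀ b ∈ s, P a → P b → a = b) :
    ∑ a ∈ s, (if P a then (1:ℝ) else 0) ≤ 1 := by
  rw [Finset.sum_boole]
  have hc : (s.filter P).card ≤ 1 := by
    refine Finset.card_le_one.2 ?_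
    intro a ha b hb
    rw [Finset.mem_filter] at ha hb
    exact h a ha.1 b hb.1 ha.2 hb.2
  exact_mod_cast hc

private lemma permMatrix_apply' {ι : Type*} [Fintype ι] [DecidableEq ι]
    (σ : Equiv.Perm ι) (i j : ι) :
    (σ.permMatrix ℝ) i j = if σ i = j then 1 else 0 := by
  simp [Equiv.Perm.permMatrix, PEquiv.toMatrix_apply, Equiv.toPEquiv_apply]

private lemma rowSum_comb (a b : ℝ) (x y : Vt N → Vt N → ℝ) (s : Vt N) :
    rowSum N (a • x + b • y) s = a * rowSum N x s + b * rowSum N y s := by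
  simp [rowSum, Finset.mul_sum, Finset.sum_add_distrib]

private lemma colSum_comb (a b : ℝ) (x y : Vt N → Vt N → ℝ) (s : Vt N) :
    colSum N (a • x + b • y) s = a * colSum N x s + b * colSum N y s := by
  simp [colSum, Finset.mul_sum, Finset.sum_add_distrib]

private lemma totalSum_comb (a b : ℝ) (x y : Vt N → Vt N → ℝ) :
    totalSum N (a • x + b • y) = a * totalSum N x + b * totalSum N y := by
  simp [totalSum, rowSum_comb, Finset.mul_sum, Finset.sum_add_distrib]

private lemma convex_kLimited (k : ℕ) :
    Convex ℝ {d : Vt N → Vt N → ℝ | kLimited N k d} := by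
  intro x hx y hy a b ha hb hab
  obtain ⟨⟨hx0, hxz, hxr, hxc⟩, hxt⟩ := hx
  obtain ⟨⟨hy0, hyz, hyr, hyc⟩, hyt⟩ := hy
  refine ⟨⟨?_, ?_, ?_, ?_⟩, ?_⟩
  · intro s t
    simp only [Pi.add_apply, Pi.smul_apply, smul_eq_mul]
    exact add_nonneg (mul_nonneg ha (hx0 s t)) (mul_nonneg hb (hy0 s t))
  · intro s
    simp [hxz s, hyz s]
  · intro s
    rw [rowSum_comb]
    nlinarith [hxr s, hyr s]
  · intro s
    rw [colSum_comb]
    nlinarith [hxc s, hyc s]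
  · rw [totalSum_comb]
    nlinarith [hxt, hyt, Nat.cast_nonneg (α := ℝ) k]

private lemma kSparse_kLimited {k : ℕ} {d : Vt N → Vt N → ℝ} (h : kSparse N k d) :
    kLimited N k d := by
  classical
  obtain ⟨ht, hr, _⟩ := h
  refine ⟨ht, ?_⟩
  have hfin : {s : Vt N | ∃ t, t ≠ 0 ∧ d s t ≠ 0}.Finite := Set.toFinite _
  have h1 : totalSum N d = ∑ s ∈ hfin.toFinset, rowSum N d s := by
    rw [totalSum]
    refine (Finset.sum_subset (Finset.subset_univ _) ?_).symm
    intro s _ hs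
    rw [rowSum]
    refine Finset.sum_eq_zero fun t ht' => ?_
    by_contra hne
    exact hs (hfin.mem_toFinset.2 ⟨t, mem_tns ht', hne⟩)
  rw [h1]
  calc ∑ s ∈ hfin.toFinset, rowSum N d s ≤ ∑ _s ∈ hfin.toFinset, (1:ℝ) :=
        Finset.sum_le_sum fun s _ => ht.2.2.1 s
    _ = (hfin.toFinset.card : ℝ) := by simp
    _ ≤ (k : ℝ) := by
        have := hr
        rw [Set.ncard_eq_toFinset_card' _] at this
        exact_mod_cast le_trans (by rw [Set.toFinite_toFinset]) this

end Stmt19Aux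
section Stmt19Hard

open Finset

variable {N : ℕ} [NeZero N]

/-- The padded doubly stochastic matrix. -/
private noncomputable def bigM (N : ℕ) [NeZero N] (k : ℕ) (d : Vt N → Vt N → ℝ) (K : Finset (Vt N)) :
    Matrix (Vt N ⊕ Vt N) (Vt N ⊕ Vt N) ℝ := fun p q =>
  match p, q with
  | Sum.inl i, Sum.inl j => d i (j - i)
  | Sum.inl i, Sum.inr _ => (1 - rowSum N d i) * ((Fintype.card (Vt N) : ℝ))⁻¹
  | Sum.inr r, Sum.inl j =>
      if r ∈ K then
        (1 - colSum N d j) * (((k : ℝ) - totalSum N d) /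
          ((k : ℝ) * ((Fintype.card (Vt N) : ℝ) - totalSum N d)))
      else (1 - colSum N d j) * (((Fintype.card (Vt N) : ℝ) - totalSum N d))⁻¹
  | Sum.inr r, Sum.inr _ =>
      if r ∈ K then totalSum N d * ((k : ℝ) * (Fintype.card (Vt N) : ℝ))⁻¹ else 0

/-- The `k`-sparse piece extracted from a permutation of the padded index set. -/
private noncomputable def qmat (N : ℕ) [NeZero N] (σ : Equiv.Perm (Vt N ⊕ Vt N)) : Vt N → Vt N → ℝ :=
  fun s t => if t = 0 then 0 else if σ (Sum.inl s) = Sum.inl (s + t) then 1 else 0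

private lemma hard_case {k : ℕ} (hk0 : 0 < k) (hkn : k < Fintype.card (Vt N))
    {d : Vt N → Vt N → ℝ} (hd : kLimited N k d) :
    d ∈ convexHull ℝ {d : Vt N → Vt N → ℝ | kSparse N k d} := by
  classical
  obtain ⟨⟨hpos, hz, hrow, hcol⟩, htot⟩ := hd
  set n := Fintype.card (Vt N) with hn
  have hcard : (Finset.univ : Finset (Vt N)).card = n := Finset.card_univ
  obtain ⟨K, -, hK⟩ := Finset.exists_subset_card_eq
    (s := (Finset.univ : Finset (Vt N))) (n := k) (by rw [hcard]; exact hkn.le)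
  have hrow0 : ∀ s, 0 ≤ rowSum N d s := fun s =>
    Finset.sum_nonneg fun t _ => hpos s t
  have hcol0 : ∀ s, 0 ≤ colSum N d s := fun s =>
    Finset.sum_nonneg fun t _ => hpos _ t
  have h0t : 0 ≤ totalSum N d := Finset.sum_nonneg fun s _ => hrow0 s
  have hkR : (0:ℝ) < (k:ℝ) := by exact_mod_cast hk0
  have hnR : (0:ℝ) < (n:ℝ) := by
    have : 0 < n := Fintype.card_pos
    exact_mod_cast this
  have hknR : (k:ℝ) < (n:ℝ) := by exact_mod_cast hkn
  have hY : (0:ℝ) < (n:ℝ) - totalSum N d := by linarith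
  have hsumR : ∑ i : Vt N, (1 - rowSum N d i) = (n:ℝ) - totalSum N d := by
    rw [Finset.sum_sub_distrib, Finset.sum_const, hcard, totalSum, nsmul_eq_mul, mul_one]
  have hsumC : ∑ j : Vt N, (1 - colSum N d j) = (n:ℝ) - totalSum N d := by
    rw [Finset.sum_sub_distrib, Finset.sum_const, hcard, sum_colSum d hz, nsmul_eq_mul, mul_one]
  -- the matrix is doubly stochastic
  have hM : bigM N k d K ∈ doublyStochastic ℝ (Vt N ⊕ Vt N) := by
    rw [mem_doublyStochastic_iff_sum]
    refine ⟨?_, ?_, ?_⟩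
    · rintro (i | r) (j | c)
      · exact hpos i (j - i)
      · exact mul_nonneg (by linarith [hrow i]) (by positivity)
      · show (0:ℝ) ≤ if r ∈ K then _ else _
        split
        · exact mul_nonneg (by linarith [hcol j])
            (div_nonneg (by linarith) (by positivity))
        · exact mul_nonneg (by linarith [hcol j]) (by positivity)
      · show (0:ℝ) ≤ if r ∈ K then _ else _
        split
        · exact mul_nonneg h0t (by positivity)
        · exact le_refl 0
    · rintro (i | r)
      · rw [Fintype.sum_sum_type]
        have h1 : ∑ j : Vt N, bigM N k d K (Sum.inl i) (Sum.inl j) = rowSum N d i :=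
          sum_dm_row d hz i
        have h2 : ∑ c : Vt N, bigM N k d K (Sum.inl i) (Sum.inr c)
            = (n:ℝ) * ((1 - rowSum N d i) * ((n:ℝ))⁻¹) := by
          have hred : ∀ c : Vt N, bigM N k d K (Sum.inl i) (Sum.inr c)
              = (1 - rowSum N d i) * ((n:ℝ))⁻¹ := fun c => rfl
          rw [Finset.sum_congr rfl fun c _ => hred c, Finset.sum_const, hcard, nsmul_eq_mul]
        rw [h1, h2]
        field_simp
        ring
      · rw [Fintype.sum_sum_type]
        by_cases hr : r ∈ K
        · have h1 : ∑ j : Vt N, bigM N k d K (Sum.inr r) (Sum.inl j)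
              = ((n:ℝ) - totalSum N d) * (((k : ℝ) - totalSum N d) /
                ((k : ℝ) * ((n : ℝ) - totalSum N d))) := by
            have hred : ∀ j : Vt N, bigM N k d K (Sum.inr r) (Sum.inl j)
                = (1 - colSum N d j) * (((k : ℝ) - totalSum N d) /
                  ((k : ℝ) * ((n : ℝ) - totalSum N d))) := fun j => by
              show (if r ∈ K then _ else _) = _
              rw [if_pos hr]
            rw [Finset.sum_congr rfl fun j _ => hred j, ← Finset.sum_mul, hsumC]
          have h2 : ∑ c : Vt N, bigM N k d K (Sum.inr r) (Sum.inr c)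
              = (n:ℝ) * (totalSum N d * ((k : ℝ) * (n : ℝ))⁻¹) := by
            have hred : ∀ c : Vt N, bigM N k d K (Sum.inr r) (Sum.inr c)
                = totalSum N d * ((k : ℝ) * (n : ℝ))⁻¹ := fun c => by
              show (if r ∈ K then _ else _) = _
              rw [if_pos hr]
            rw [Finset.sum_congr rfl fun c _ => hred c, Finset.sum_const, hcard, nsmul_eq_mul]
          rw [h1, h2]
          field_simp
          ring
        · have h1 : ∑ j : Vt N, bigM N k d K (Sum.inr r) (Sum.inl j)
              = ((n:ℝ) - totalSum N d) * (((n : ℝ) - totalSum N d))⁻¹ := by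
            have hred : ∀ j : Vt N, bigM N k d K (Sum.inr r) (Sum.inl j)
                = (1 - colSum N d j) * (((n : ℝ) - totalSum N d))⁻¹ := fun j => by
              show (if r ∈ K then _ else _) = _
              rw [if_neg hr]
            rw [Finset.sum_congr rfl fun j _ => hred j, ← Finset.sum_mul, hsumC]
          have h2 : ∑ c : Vt N, bigM N k d K (Sum.inr r) (Sum.inr c) = 0 := by
            refine Finset.sum_eq_zero fun c _ => ?_
            show (if r ∈ K then _ else _) = _
            rw [if_neg hr]
          rw [h1, h2, mul_inv_cancel₀ (by linarith), add_zero]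
    · rintro (j | c)
      · rw [Fintype.sum_sum_type]
        have h1 : ∑ i : Vt N, bigM N k d K (Sum.inl i) (Sum.inl j) = colSum N d j :=
          sum_dm_col d hz j
        have h2 : ∑ r : Vt N, bigM N k d K (Sum.inr r) (Sum.inl j)
            = (k:ℝ) * ((1 - colSum N d j) * (((k : ℝ) - totalSum N d) /
                ((k : ℝ) * ((n : ℝ) - totalSum N d))))
              + ((n:ℝ) - (k:ℝ)) * ((1 - colSum N d j) * (((n : ℝ) - totalSum N d))⁻¹) := by
          have hred : ∀ r : Vt N, bigM N k d K (Sum.inr r) (Sum.inl j)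
              = if r ∈ K then (1 - colSum N d j) * (((k : ℝ) - totalSum N d) /
                  ((k : ℝ) * ((n : ℝ) - totalSum N d)))
                else (1 - colSum N d j) * (((n : ℝ) - totalSum N d))⁻¹ := fun r => rfl
          rw [Finset.sum_congr rfl fun r _ => hred r, Finset.sum_ite, Finset.sum_const,
            Finset.sum_const]
          have e1 : Finset.univ.filter (fun r : Vt N => r ∈ K) = K := by
            ext r; simp
          have e2 : (Finset.univ.filter (fun r : Vt N => ¬ r ∈ K)).card = n - k := by
            rw [Finset.filter_not, Finset.card_sdiff_of_subset (by intro x hx; simp_all [e1])]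
            rw [e1, hcard, hK]
          rw [e1, e2, hK, nsmul_eq_mul, nsmul_eq_mul, Nat.cast_sub hkn.le]
        rw [h1, h2]
        field_simp
        ring
      · rw [Fintype.sum_sum_type]
        have h1 : ∑ i : Vt N, bigM N k d K (Sum.inl i) (Sum.inr c)
            = ((n:ℝ) - totalSum N d) * ((n:ℝ))⁻¹ := by
          have hred : ∀ i : Vt N, bigM N k d K (Sum.inl i) (Sum.inr c)
              = (1 - rowSum N d i) * ((n:ℝ))⁻¹ := fun i => rfl
          rw [Finset.sum_congr rfl fun i _ => hred i, ← Finset.sum_mul, hsumR]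
        have h2 : ∑ r : Vt N, bigM N k d K (Sum.inr r) (Sum.inr c)
            = (k:ℝ) * (totalSum N d * ((k : ℝ) * (n : ℝ))⁻¹) := by
          have hred : ∀ r : Vt N, bigM N k d K (Sum.inr r) (Sum.inr c)
              = if r ∈ K then totalSum N d * ((k : ℝ) * (n : ℝ))⁻¹ else 0 := fun r => rfl
          rw [Finset.sum_congr rfl fun r _ => hred r, Finset.sum_ite, Finset.sum_const,
            Finset.sum_const, smul_zero, add_zero]
          have e1 : Finset.univ.filter (fun r : Vt N => r ∈ K) = K := by
            ext r; simp
          rw [e1, hK, nsmul_eq_mul]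
        rw [h1, h2]
        field_simp
        ring
  -- Birkhoff decomposition
  obtain ⟨w, hw0, hw1, hwM⟩ := exists_eq_sum_perm_of_mem_doublyStochastic hM
  set F := Finset.univ.filter (fun σ : Equiv.Perm (Vt N ⊕ Vt N) => 0 < w σ) with hF
  have hwpos : ∀ σ ∈ F, 0 < w σ := fun σ hσ => (Finset.mem_filter.1 hσ).2
  have hF1 : ∑ σ ∈ F, w σ = 1 := by
    rw [hF, Finset.sum_filter_of_ne (fun σ _ h => (hw0 σ).lt_of_ne (Ne.symm h))]
    exact hw1
  have hFM : ∑ σ ∈ F, w σ • σ.permMatrix ℝ = bigM N k d K := by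
    rw [hF, Finset.sum_filter_of_ne]
    · exact hwM
    · intro σ _ h
      rcases (hw0 σ).lt_or_eq with h' | h'
      · exact h'
      · exact absurd (by rw [← h', zero_smul]) h
  have hent : ∀ p q, ∑ σ ∈ F, w σ * (σ.permMatrix ℝ) p q = bigM N k d K p q := by
    intro p q
    have := congrFun (congrFun hFM p) q
    simpa [Matrix.sum_apply, Matrix.smul_apply, smul_eq_mul] using this
  have hpm01 : ∀ (σ : Equiv.Perm (Vt N ⊕ Vt N)) p q, 0 ≤ (σ.permMatrix ℝ) p q := by
    intro σ p q
    rw [permMatrix_apply']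
    split <;> norm_num
  -- the zero block
  have hblock : ∀ σ ∈ F, ∀ r c : Vt N, r ∉ K → σ (Sum.inr r) ≠ Sum.inr c := by
    intro σ hσ r c hr heq
    have h0 : bigM N k d K (Sum.inr r) (Sum.inr c) = 0 := by
      show (if r ∈ K then _ else _) = _
      rw [if_neg hr]
    have hsum := hent (Sum.inr r) (Sum.inr c)
    rw [h0] at hsum
    have hterm := (Finset.sum_eq_zero_iff_of_nonneg
      (fun τ _ => mul_nonneg (hw0 τ) (hpm01 τ _ _))).1 hsum σ hσ
    rw [permMatrix_apply', if_pos heq, mul_one] at hterm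
    exact (hwpos σ hσ).ne' hterm
  -- counting: at most k real rows map to real columns
  have hA : ∀ σ ∈ F,
      (Finset.univ.filter (fun s : Vt N => ∃ j : Vt N, σ (Sum.inl s) = Sum.inl j)).card ≤ k := by
    intro σ hσ
    set A := Finset.univ.filter (fun s : Vt N => ∃ j : Vt N, σ (Sum.inl s) = Sum.inl j) with hAdef
    have hmap : ∀ c ∈ (Finset.univ : Finset (Vt N)),
        σ.symm (Sum.inr c) ∈ ((Finset.univ \ A).image Sum.inl ∪ K.image Sum.inr) := by
      intro c _
      rcases h : σ.symm (Sum.inr c) with s | r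
      · refine Finset.mem_union_left _ (Finset.mem_image.2 ⟨s, ?_, rfl⟩)
        have hs : σ (Sum.inl s) = Sum.inr c := by
          rw [← h, Equiv.apply_symm_apply]
        have hsA : s ∉ A := by
          rw [hAdef, Finset.mem_filter]
          rintro ⟨-, j, hj⟩
          rw [hs] at hj
          exact absurd hj (by simp)
        exact Finset.mem_sdiff.2 ⟨Finset.mem_univ s, hsA⟩
      · refine Finset.mem_union_right _ (Finset.mem_image.2 ⟨r, ?_, rfl⟩)
        have hs : σ (Sum.inr r) = Sum.inr c := by
          rw [← h, Equiv.apply_symm_apply]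
        by_contra hrK
        exact hblock σ hσ r c hrK hs
    have hinj : Set.InjOn (fun c : Vt N => σ.symm (Sum.inr c))
        ↑(Finset.univ : Finset (Vt N)) := fun a _ b _ h =>
      Sum.inr_injective (σ.symm.injective h)
    have hcards := Finset.card_le_card_of_injOn _ hmap hinj
    have h1 : ((Finset.univ \ A).image Sum.inl ∪ K.image Sum.inr).card ≤ (n - A.card) + k := by
      refine le_trans (Finset.card_union_le _ _) ?_
      rw [Finset.card_image_of_injective _ (Sum.inl_injective : Function.Injective (Sum.inl : Vt N → Vt N ⊕ Vt N)),
        Finset.card_image_of_injective _ (Sum.inr_injective : Function.Injective (Sum.inr : Vt N → Vt N ⊕ Vt N)),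
        Finset.card_sdiff_of_subset (Finset.subset_univ _), hcard, hK]
    have h2 : A.card ≤ n := by
      rw [← hcard]; exact Finset.card_le_card (Finset.subset_univ _)
    rw [hcard] at hcards
    omega
  -- counting: at most k real columns are hit by real rows
  have hB : ∀ σ ∈ F,
      (Finset.univ.filter (fun s : Vt N => ∃ r : Vt N, σ (Sum.inl r) = Sum.inl s)).card ≤ k := by
    intro σ hσ
    set B := Finset.univ.filter (fun s : Vt N => ∃ r : Vt N, σ (Sum.inl r) = Sum.inl s) with hBdef
    have hmap : ∀ r ∈ (Finset.univ \ K),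
        σ (Sum.inr r) ∈ (Finset.univ \ B).image (Sum.inl : Vt N → Vt N ⊕ Vt N) := by
      intro r hr
      rw [Finset.mem_sdiff] at hr
      rcases h : σ (Sum.inr r) with j | c
      · refine Finset.mem_image.2 ⟨j, ?_, rfl⟩
        have hjB : j ∉ B := by
          rw [hBdef, Finset.mem_filter]
          rintro ⟨-, r', hr'⟩
          have : Sum.inl (α := Vt N) r' = Sum.inr r := σ.injective (by rw [hr', h])
          exact absurd this (by simp)
        exact Finset.mem_sdiff.2 ⟨Finset.mem_univ j, hjB⟩
      · exact absurd h (hblock σ hσ r c hr.2)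
    have hinj : Set.InjOn (fun r : Vt N => σ (Sum.inr r)) ↑(Finset.univ \ K) :=
      fun a _ b _ h => Sum.inr_injective (σ.injective h)
    have hcards := Finset.card_le_card_of_injOn _ hmap hinj
    have h1 : (Finset.univ \ K).card = n - k := by
      rw [Finset.card_sdiff_of_subset (Finset.subset_univ _), hcard, hK]
    have h2 : ((Finset.univ \ B).image (Sum.inl : Vt N → Vt N ⊕ Vt N)).card = n - B.card := by
      rw [Finset.card_image_of_injective _ (Sum.inl_injective : Function.Injective (Sum.inl : Vt N → Vt N ⊕ Vt N)),
        Finset.card_sdiff_of_subset (Finset.subset_univ _), hcard]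
    have h3 : B.card ≤ n := by
      rw [← hcard]; exact Finset.card_le_card (Finset.subset_univ _)
    rw [h1, h2] at hcards
    omega
  -- each piece is k-sparse
  have hqspar : ∀ σ ∈ F, qmat N σ ∈ {d : Vt N → Vt N → ℝ | kSparse N k d} := by
    intro σ hσ
    refine ⟨⟨?_, ?_, ?_, ?_⟩, ?_, ?_⟩
    · intro s t
      rw [qmat]
      split_ifs <;> norm_num
    · intro s
      rw [qmat]
      simp
    · intro s
      rw [rowSum]
      have hcong : ∀ t ∈ tns N, qmat N σ s t
          = if σ (Sum.inl s) = Sum.inl (s + t) then (1:ℝ) else 0 := by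
        intro t ht
        rw [qmat, if_neg (mem_tns ht)]
      rw [Finset.sum_congr rfl hcong]
      refine sum_ite_le_one _ _ ?_
      intro a _ b _ hPa hPb
      have : (Sum.inl (s + a) : Vt N ⊕ Vt N) = Sum.inl (s + b) := by rw [← hPa, ← hPb]
      exact add_left_cancel (Sum.inl_injective this)
    · intro s
      rw [colSum]
      have hcong : ∀ t ∈ tns N, qmat N σ (s - t) t
          = if σ (Sum.inl (s - t)) = Sum.inl s then (1:ℝ) else 0 := by
        intro t ht
        rw [qmat, if_neg (mem_tns ht), sub_add_cancel]
      rw [Finset.sum_congr rfl hcong]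
      refine sum_ite_le_one _ _ ?_
      intro a _ b _ hPa hPb
      have : (Sum.inl (s - a) : Vt N ⊕ Vt N) = Sum.inl (s - b) :=
        σ.injective (by rw [hPa, hPb])
      exact sub_right_inj.1 (Sum.inl_injective this)
    · refine le_trans (le_trans (Set.ncard_le_ncard ?_ (Set.toFinite _))
        (le_of_eq (Set.ncard_coe_finset _))) (hA σ hσ)
      intro s hs
      obtain ⟨t, ht, hne⟩ := hs
      rw [qmat, if_neg ht] at hne
      simp only [Finset.coe_filter, Finset.mem_univ, true_and, Set.mem_setOf_eq]
      refine ⟨s + t, ?_⟩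
      by_contra hc
      rw [if_neg hc] at hne
      exact hne rfl
    · refine le_trans (le_trans (Set.ncard_le_ncard ?_ (Set.toFinite _))
        (le_of_eq (Set.ncard_coe_finset _))) (hB σ hσ)
      intro s hs
      obtain ⟨t, ht, hne⟩ := hs
      rw [qmat, if_neg ht, sub_add_cancel] at hne
      simp only [Finset.coe_filter, Finset.mem_univ, true_and, Set.mem_setOf_eq]
      refine ⟨s - t, ?_⟩
      by_contra hc
      rw [if_neg hc] at hne
      exact hne rfl
  -- the decomposition reconstructs d
  have hdq : ∑ σ ∈ F, w σ • qmat N σ = d := by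
    funext s t
    have happ : (∑ σ ∈ F, w σ • qmat N σ) s t = ∑ σ ∈ F, w σ * qmat N σ s t := by
      rw [Finset.sum_apply, Finset.sum_apply]
      simp
    rw [happ]
    by_cases ht : t = 0
    · subst ht
      rw [hz s]
      refine Finset.sum_eq_zero fun σ _ => ?_
      rw [qmat, if_pos rfl, mul_zero]
    · have hcong : ∀ σ ∈ F, w σ * qmat N σ s t
          = w σ * (σ.permMatrix ℝ) (Sum.inl s) (Sum.inl (s + t)) := by
        intro σ _
        rw [qmat, if_neg ht, permMatrix_apply']
      rw [Finset.sum_congr rfl hcong, hent (Sum.inl s) (Sum.inl (s + t))]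
      show d s (s + t - s) = d s t
      rw [add_sub_cancel_left]
  have hmain := Finset.centerMass_mem_convexHull F (fun σ _ => hw0 σ)
    (by rw [hF1]; norm_num) hqspar
  rwa [Finset.centerMass_eq_of_sum_1 _ _ hF1, hdq] at hmain

end Stmt19Hard

/-- The convex hull of the set `D'_k` of `k`-sparse traffic matrices equals the
polytope `D_k` of `k`-limited traffic matrices. -/
theorem stmt19 (N : ℕ) [NeZero N] (k : ℕ) :
    convexHull ℝ {d : Vt N → Vt N → ℝ | kSparse N k d} =
      {d : Vt N → Vt N → ℝ | kLimited N k d} := by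
  classical
  apply Set.Subset.antisymm
  · exact convexHull_min (fun d hd => kSparse_kLimited hd) (convex_kLimited k)
  · intro d hd
    rcases Nat.eq_zero_or_pos k with rfl | hk0
    · -- `k = 0`: the only 0-limited matrix is 0
      have htot0 : totalSum N d = 0 := le_antisymm (by exact_mod_cast hd.2)
        (Finset.sum_nonneg fun s _ => Finset.sum_nonneg fun t _ => hd.1.1 s t)
      have hrow0 : ∀ s, rowSum N d s = 0 := by
        have := (Finset.sum_eq_zero_iff_of_nonneg
          (fun s _ => Finset.sum_nonneg fun t _ => hd.1.1 s t)).1 htot0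
        exact fun s => this s (Finset.mem_univ s)
      have hd0 : d = 0 := by
        funext s t
        by_cases ht : t = 0
        · rw [ht, hd.1.2.1 s]; rfl
        · have := (Finset.sum_eq_zero_iff_of_nonneg
            (fun t _ => hd.1.1 s t)).1 (hrow0 s) t
          simp only [tns, Finset.mem_filter, Finset.mem_univ, true_and] at this
          exact this ht
      rw [hd0]
      refine subset_convexHull ℝ _ ?_
      refine ⟨⟨fun s t => le_refl 0, fun s => rfl, ?_, ?_⟩, ?_, ?_⟩
      · intro s; simp [rowSum]
      · intro s; simp [colSum]
      · simp
      · simp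
    · rcases le_or_gt (Fintype.card (Vt N)) k with hnk | hkn
      · -- trivial case: fewer than `k` nodes in total
        refine subset_convexHull ℝ _ ?_
        have hb : ∀ S : Set (Vt N), S.ncard ≤ k := fun S =>
          le_trans (le_trans (Set.ncard_le_ncard (Set.subset_univ S) Set.finite_univ)
            (le_of_eq (by rw [Set.ncard_univ, Nat.card_eq_fintype_card]))) hnk
        exact ⟨hd.1, hb _, hb _⟩
      · exact hard_case hk0 hkn hd
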